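/- Define G(a,b) = (|a|² − |b|²)² − 2·Re[(a·conj(b))²] + 5|a|²|b|² for a = cos(θ/2), b = e^{-iφ} sin(θ/2). Then the maximum of G over all (θ, φ) ∈ [0,π]×[0,2π) equals 7/4, attained at θ = φ = π/2. -/

import Mathlib

open ComplexConjugate Real

/-- The coefficient of `p²` in the fidelity loss of the adaptive QEC protocol,
for the encoded state with `a = cos(θ/2)`, `b = e^{-iφ} sin(θ/2)`. -/
noncomputable def Gcoeff (θ φ : ℝ) : ℝ :=
  let a : ℂ := (Real.cos (θ / 2) : ℂ)
  let b : ℂ := Complex.exp (-(Complex.I * φ)) * (Real.sin (θ / 2) : ℂ)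
  (‖a‖ ^ 2 - ‖b‖ ^ 2) ^ 2 - 2 * ((a * conj b) ^ 2).re + 5 * ‖a‖ ^ 2 * ‖b‖ ^ 2

lemma Gcoeff_eq (θ φ : ℝ) :
    Gcoeff θ φ = (Real.cos (θ/2)^2 - Real.sin (θ/2)^2)^2
      - 2 * (Real.cos (θ/2)^2 * Real.sin (θ/2)^2 * Real.cos (2*φ))
      + 5 * Real.cos (θ/2)^2 * Real.sin (θ/2)^2 := by
  have hb : ‖Complex.exp (-(Complex.I * φ))‖ = 1 := by
    rw [Complex.norm_exp]
    simp
  have hconj : conj (Complex.exp (-(Complex.I * (φ:ℂ))) * (Real.sin (θ/2) : ℂ))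
      = Complex.exp (Complex.I * φ) * (Real.sin (θ/2) : ℂ) := by
    rw [map_mul, ← Complex.exp_conj, Complex.conj_ofReal]
    simp
  have h2 : Complex.exp (Complex.I * φ) ^ 2 = Complex.exp ((2*φ:ℝ) * Complex.I) := by
    rw [← Complex.exp_nat_mul]; push_cast; ring_nf
  have hre : (((Real.cos (θ/2) : ℂ) * (Complex.exp (Complex.I * φ) * (Real.sin (θ/2) : ℂ)))^2).re
      = Real.cos (θ/2)^2 * Real.sin (θ/2)^2 * Real.cos (2*φ) := by
    have : ((Real.cos (θ/2) : ℂ) * (Complex.exp (Complex.I * φ) * (Real.sin (θ/2) : ℂ)))^2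
        = (((Real.cos (θ/2)^2 * Real.sin (θ/2)^2 : ℝ)) : ℂ) * Complex.exp ((2*φ:ℝ) * Complex.I) := by
      rw [mul_pow, mul_pow, h2]; push_cast; ring
    rw [this, Complex.exp_mul_I, ← Complex.ofReal_cos, ← Complex.ofReal_sin]
    simp [-Complex.ofReal_cos, -Complex.ofReal_sin, Complex.mul_re, Complex.add_re,
      Complex.add_im, Complex.mul_im, Complex.ofReal_re, Complex.ofReal_im,
      Complex.I_re, Complex.I_im, ← Complex.ofReal_pow]
  simp only [Gcoeff, norm_mul, hb, Complex.norm_real, one_mul, hconj, hre,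
    Real.norm_eq_abs, sq_abs]

theorem Gcoeff_max :
    Gcoeff (Real.pi / 2) (Real.pi / 2) = 7 / 4 ∧
    ∀ θ φ : ℝ, 0 ≤ θ → θ ≤ Real.pi → 0 ≤ φ → φ < 2 * Real.pi →
      Gcoeff θ φ ≤ 7 / 4 := by
  constructor
  · rw [Gcoeff_eq]
    have h1 : Real.pi / 2 / 2 = Real.pi / 4 := by ring
    rw [h1, Real.cos_pi_div_four, Real.sin_pi_div_four,
      show 2 * (Real.pi / 2) = Real.pi by ring, Real.cos_pi]
    have : Real.sqrt 2 ^ 2 = 2 := Real.sq_sqrt (by norm_num)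
    nlinarith [this]
  · intro θ φ _ _ _ _
    rw [Gcoeff_eq]
    have h1 : Real.cos (θ/2)^2 + Real.sin (θ/2)^2 = 1 := by
      rw [add_comm]; exact Real.sin_sq_add_cos_sq _
    have h2 : -1 ≤ Real.cos (2*φ) := Real.neg_one_le_cos _
    nlinarith [sq_nonneg (Real.cos (θ/2)^2 - Real.sin (θ/2)^2),
      sq_nonneg (Real.cos (θ/2) * Real.sin (θ/2)),
      mul_nonneg (sq_nonneg (Real.cos (θ/2) * Real.sin (θ/2))) (by linarith : (0:ℝ) ≤ 1 + Real.cos (2*φ))]
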